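/- Let (G,f) = der_θ(G,·) with θ^{n-1} = id, Λ ∈ Aut(G,f), and u = Λ(e). Then the map Λ*_e : G*_e → G*_u defined by Λ*_e(i,x) = (i, Λ(x)) is a group isomorphism between the Post covers based at e and at u. -/

import Mathlib

/-- The `n`-ary operation of `der_θ(G,·)`. -/
def derF {G : Type*} [Group G] (n : ℕ) (θ : MulAut G) (x : Fin n → G) : G :=
  (List.ofFn fun i : Fin n => (θ ^ (i : ℕ)) (x i)).prod

/-- Iterated application of `f` (i.e. `f_*`) to a list whose length is `≡ 1 mod (n-1)`:
for `der_θ(G,·)` this is the product `∏ θ^{t mod (n-1)}(L_t)`. -/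
def longProd {G : Type*} [Group G] (n : ℕ) (θ : MulAut G) (L : List G) : G :=
  (L.zipIdx.map fun p => (θ ^ (p.2 % (n - 1))) p.1).prod

/-- Multiplication of the Post cover `G*_a` based at `a`, with skew element `abar`:
`(i,x) ∗ (j,y) = (i+j+1, f_*(x, a^{(i)}, y, a^{(j)}, ā, a^{(n-i-j-3 mod n-1)}))`. -/
def postOpA {G : Type*} [Group G] (n : ℕ) (θ : MulAut G) (a abar : G)
    (p q : ZMod (n - 1) × G) : ZMod (n - 1) × G :=
  (p.1 + q.1 + 1,
    longProd n θ
      ([p.2] ++ List.replicate p.1.val a ++ [q.2] ++ List.replicate q.1.val a ++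
        [abar] ++
        List.replicate ((((n : ℤ) - p.1.val - q.1.val - 3) % ((n : ℤ) - 1)).toNat) a))

namespace PostAux
variable {G : Type*} [Group G]

def lp (θ : MulAut G) : ℕ → List G → G
  | _, [] => 1
  | k, a :: L => (θ ^ k) a * lp θ (k+1) L

@[simp] lemma lp_nil (θ : MulAut G) (k : ℕ) : lp θ k [] = 1 := rfl

@[simp] lemma lp_cons (θ : MulAut G) (k : ℕ) (a : G) (L : List G) :
    lp θ k (a :: L) = (θ ^ k) a * lp θ (k+1) L := rfl

lemma lp_append (θ : MulAut G) (L₁ L₂ : List G) : ∀ k,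
    lp θ k (L₁ ++ L₂) = lp θ k L₁ * lp θ (k + L₁.length) L₂ := by
  induction L₁ with
  | nil => simp
  | cons a L ih =>
      intro k
      rw [List.cons_append, lp_cons, lp_cons, ih (k+1), mul_assoc, List.length_cons,
        show k + (L.length+1) = k+1+L.length by omega]

lemma lp_list (θ : MulAut G) (x y z w : G) (i j m : ℕ) :
    lp θ 0 ([x] ++ List.replicate i w ++ [y] ++ List.replicate j w ++ [z] ++ List.replicate m w)
      = x * lp θ 1 (List.replicate i w) * (θ^(i+1)) y * lp θ (i+2) (List.replicate j w)
          * (θ^(i+j+2)) z * lp θ (i+j+3) (List.replicate m w) := by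
  simp only [lp_append, lp_cons, lp_nil, List.length_append, List.length_replicate,
    List.length_cons, List.length_nil, List.length_singleton, pow_zero, MulAut.one_apply,
    mul_one]
  ring_nf

lemma lp_list4 (θ : MulAut G) (x y : G) (A B : List G) :
    lp θ 0 ([x] ++ A ++ [y] ++ B)
      = x * lp θ 1 A * (θ^(A.length+1)) y * lp θ (A.length+2) B := by
  simp only [lp_append, lp_cons, lp_nil, List.length_append, List.length_cons,
    List.length_nil, List.length_singleton, pow_zero, MulAut.one_apply, mul_one]
  ring_nf

lemma lp_replicate_add (θ : MulAut G) (w : G) (k m₁ m₂ : ℕ) :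
    lp θ k (List.replicate (m₁+m₂) w)
      = lp θ k (List.replicate m₁ w) * lp θ (k+m₁) (List.replicate m₂ w) := by
  rw [List.replicate_add, lp_append, List.length_replicate]

@[simp] lemma lp_replicate_one (θ : MulAut G) : ∀ (k m : ℕ),
    lp θ k (List.replicate m (1 : G)) = 1
  | k, 0 => rfl
  | k, m+1 => by simp [List.replicate_succ, lp_replicate_one θ (k+1) m]

lemma lp_shift (θ : MulAut G) (d : ℕ) (L : List G) : ∀ k,
    lp θ (d + k) L = (θ ^ d) (lp θ k L) := by
  induction L with
  | nil => simp
  | cons a L ih =>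
      intro k
      simp [map_mul, pow_add, MulAut.mul_apply, ← ih (k+1), add_assoc]

lemma pow_mod (θ : MulAut G) {n : ℕ} (hθ : θ ^ (n-1) = 1) (t : ℕ) :
    θ ^ (t % (n-1)) = θ ^ t := by
  conv_rhs => rw [← Nat.mod_add_div t (n-1)]
  rw [pow_add, pow_mul, hθ, one_pow, mul_one]

lemma enumFrom_prod (θ : MulAut G) {n : ℕ} (hθ : θ ^ (n-1) = 1) :
    ∀ (L : List G) (k : ℕ),
      ((L.zipIdx k).map fun p => (θ ^ (p.2 % (n-1))) p.1).prod = lp θ k L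
  | [], _ => rfl
  | a :: L, k => by
      rw [List.zipIdx_cons, List.map_cons, List.prod_cons,
        enumFrom_prod θ hθ L (k+1), pow_mod θ hθ, lp_cons]

lemma longProd_eq_lp {n : ℕ} (θ : MulAut G) (hθ : θ ^ (n-1) = 1) (L : List G) :
    longProd n θ L = lp θ 0 L := by
  rw [longProd, show L.zipIdx = L.zipIdx 0 from rfl, enumFrom_prod θ hθ]

lemma ofFn_prod (θ : MulAut G) : ∀ {m : ℕ} (x : Fin m → G) (k : ℕ),
    (List.ofFn fun i : Fin m => (θ ^ (k + (i:ℕ))) (x i)).prod = lp θ k (List.ofFn x)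
  | 0, x, k => by simp
  | m+1, x, k => by
      rw [List.ofFn_succ, List.ofFn_succ (f := x)]
      simp only [List.prod_cons, lp_cons, Fin.val_zero, add_zero, Fin.val_succ]
      have h : (fun i : Fin m => (θ ^ (k + ((i:ℕ)+1))) (x i.succ))
          = fun i : Fin m => (θ ^ ((k+1) + (i:ℕ))) (x i.succ) := by
        funext i; congr 2; omega
      rw [h, ofFn_prod θ (fun i => x i.succ) (k+1)]

lemma derF_eq {m : ℕ} (θ : MulAut G) (x : Fin m → G) :
    derF m θ x = lp θ 0 (List.ofFn x) := by
  rw [← ofFn_prod θ x 0, derF]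
  simp

end PostAux


/-- Let `(G,f) = der_θ(G,·)` with `θ^{n-1} = id`, let `Λ ∈ Aut(G,f)` and `u = Λ(e)`
(with skew element `ū`).  Then `Λ*_e(i,x) = (i, Λ(x))` is a group isomorphism from
the Post cover `G*_e` to the Post cover `G*_u`. -/
theorem post_cover_base_change_iso {G : Type*} [Group G] (n : ℕ) (hn : 2 ≤ n)
    (θ : MulAut G) (hθ : θ ^ (n - 1) = 1)
    (Λ : G → G) (hbij : Function.Bijective Λ)
    (hhom : ∀ x : Fin n → G, Λ (derF n θ x) = derF n θ (fun i => Λ (x i)))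
    (u : G) (hu : u = Λ 1)
    (ubar : G) (hubar : longProd n θ (ubar :: List.replicate (n - 1) u) = u) :
    Function.Bijective (fun p : ZMod (n - 1) × G => (p.1, Λ p.2)) ∧
      ∀ p q : ZMod (n - 1) × G,
        ((postOpA n θ 1 1 p q).1, Λ (postOpA n θ 1 1 p q).2) =
          postOpA n θ u ubar (p.1, Λ p.2) (q.1, Λ q.2) := by
  haveI : NeZero (n-1) := ⟨by omega⟩
  open PostAux in
  constructor
  · constructor
    · rintro ⟨a, b⟩ ⟨c, d⟩ h
      simp only [Prod.mk.injEq] at h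
      exact Prod.ext h.1 (hbij.1 h.2)
    · rintro ⟨a, b⟩
      obtain ⟨x, hx⟩ := hbij.2 b
      exact ⟨(a, x), by simp [hx]⟩
  -- homomorphism property
  have hhomL : ∀ L : List G, L.length = n → Λ (lp θ 0 L) = lp θ 0 (L.map Λ) := by
    intro L hL
    have hx : List.ofFn (fun i : Fin n => L[(i:ℕ)]'(by omega)) = L := by
      apply List.ext_getElem
      · simp [hL]
      · intro i h1 h2; simp
    have hx2 : List.ofFn (fun i : Fin n => Λ (L[(i:ℕ)]'(by omega))) = L.map Λ := by
      apply List.ext_getElem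
      · simp [hL]
      · intro i h1 h2; simp
    have h := hhom (fun i : Fin n => L[(i:ℕ)]'(by omega))
    rw [derF_eq, derF_eq, hx, hx2] at h
    exact h
  have hQ1 : lp θ 1 (List.replicate (n-1) u) = 1 := by
    have h := hhomL (List.replicate n 1) (by simp)
    rw [lp_replicate_one, List.map_replicate, ← hu,
      show n = (n-1)+1 by omega, List.replicate_succ, lp_cons, pow_zero,
      MulAut.one_apply] at h
    rw [zero_add] at h
    exact left_eq_mul.mp h
  have hQfull : ∀ k : ℕ, lp θ (k+1) (List.replicate (n-1) u) = 1 := by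
    intro k
    rw [lp_shift θ k _ 1, hQ1, map_one]
  have hubar' : ubar = u := by
    rw [longProd_eq_lp θ hθ, lp_cons, pow_zero, MulAut.one_apply,
      show (0:ℕ)+1 = 1 from rfl, hQ1, mul_one] at hubar
    exact hubar
  have key : ∀ (k : ℕ), 1 ≤ k → k ≤ n-1 → ∀ x y : G,
      Λ (x * (θ^k) y) = Λ x * lp θ 1 (List.replicate (k-1) u) * (θ^k) (Λ y)
          * lp θ (k+1) (List.replicate (n-1-k) u) := by
    intro k hk1 hk2 x y
    have h := hhomL ([x] ++ List.replicate (k-1) (1:G) ++ [y] ++ List.replicate (n-1-k) (1:G))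
        (by
          simp only [List.length_append, List.length_replicate, List.length_cons,
            List.length_nil, List.length_singleton]
          omega)
    rw [lp_list4] at h
    simp only [List.map_append, List.map_replicate, List.map_cons, List.map_nil, ← hu] at h
    rw [lp_list4] at h
    simp only [lp_replicate_one, mul_one, List.length_replicate] at h
    rw [show k-1+1 = k by omega, show k-1+2 = k+1 by omega] at h
    exact h
  intro p q
  simp only [postOpA, Prod.mk.injEq]
  refine ⟨trivial, ?_⟩
  set i := p.1.val with hi_def
  set j := q.1.val with hj_def
  have hi : i < n-1 := ZMod.val_lt _
  have hj : j < n-1 := ZMod.val_lt _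
  set m := (((n:ℤ) - i - j - 3) % ((n:ℤ)-1)).toNat with hm_def
  rw [longProd_eq_lp θ hθ, longProd_eq_lp θ hθ, lp_list, lp_list]
  simp only [lp_replicate_one, map_one, mul_one, hubar']
  rw [key (i+1) (by omega) (by omega) p.2 q.2,
    show i+1-1 = i by omega, show i+1+1 = i+2 by omega, show n-1-(i+1) = n-2-i by omega]
  have hsplit : ∀ c : ℕ, lp θ (i+2) (List.replicate (j+1+c) u)
      = lp θ (i+2) (List.replicate j u) * (θ^(i+j+2)) u * lp θ (i+j+3) (List.replicate c u) := by
    intro c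
    rw [show j+1+c = j+(1+c) by omega, lp_replicate_add,
      show (1:ℕ)+c = c+1 by omega, List.replicate_succ, lp_cons,
      show i+2+j = i+j+2 by omega, show i+j+2+1 = i+j+3 by omega, mul_assoc]
  have hS : lp θ (i+2) (List.replicate (n-2-i) u)
      = lp θ (i+2) (List.replicate j u) * (θ^(i+j+2)) u * lp θ (i+j+3) (List.replicate m u) := by
    rw [← hsplit m]
    by_cases hc : i + j + 3 ≤ n
    · have h1 : ((n:ℤ) - i - j - 3) % ((n:ℤ)-1) = ((n:ℤ) - i - j - 3) :=
        Int.emod_eq_of_lt (by omega) (by omega)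
      have hm : m = n - i - j - 3 := by omega
      rw [hm, show j+1+(n-i-j-3) = n-2-i by omega]
    · have h1 : ((n:ℤ) - i - j - 3) % ((n:ℤ)-1) = ((n:ℤ) - i - j - 3) + ((n:ℤ)-1) := by
        have h2 : ((n:ℤ) - i - j - 3) % ((n:ℤ)-1)
            = (((n:ℤ) - i - j - 3) + ((n:ℤ)-1)*1) % ((n:ℤ)-1) := by
          rw [Int.add_mul_emod_self_left]
        rw [h2, mul_one]
        exact Int.emod_eq_of_lt (by omega) (by omega)
      have hm : m = 2*n - i - j - 4 := by omega
      rw [hm, show j+1+(2*n-i-j-4) = (n-2-i)+(n-1) by omega, lp_replicate_add,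
        show i+2+(n-2-i) = (n-1)+1 by omega, hQfull, mul_one]
  rw [hS]
  simp only [mul_assoc]
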